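/- Let G be a connected simple graph on n ≥ 3 vertices with Wiener index W(G) and maximum transmission Tr_max(G). Then DLS(G) ≥ ((n−1)(Tr_max(G)+1) − 2W(G))/(n−2), with equality if and only if G is the complete graph K_n. -/

import Mathlib

open Finset Matrix Polynomial

/-- The transmission `Tr(v)` of a vertex `v`: the sum of the distances from `v`
to all other vertices of the graph. -/
noncomputable def transm {n : ℕ} (G : SimpleGraph (Fin n)) (v : Fin n) : ℝ :=
  ∑ u : Fin n, (G.dist v u : ℝ)

/-- The distance Laplacian matrix `D^L(G) = Diag(Tr) - D(G)` of a graph `G`. -/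
noncomputable def distLap {n : ℕ} (G : SimpleGraph (Fin n)) : Matrix (Fin n) (Fin n) ℝ :=
  Matrix.diagonal (transm G) - Matrix.of (fun u v : Fin n => (G.dist u v : ℝ))

/-- `IsDLSpec G μ` says that `μ 0 , μ 1 , …, μ (n-1)` are exactly the eigenvalues
(with multiplicity) of the distance Laplacian matrix of `G`; combined with `Antitone μ`
this means `μ ⟨i-1,_⟩ = ∂_i^L(G)` in the usual decreasing ordering. -/
def IsDLSpec {n : ℕ} (G : SimpleGraph (Fin n)) (μ : Fin n → ℝ) : Prop :=
  (distLap G).charpoly = ∏ i : Fin n, (X - C (μ i))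

/-- The Wiener index `W(G) = (1/2) ∑_v Tr(v)`. -/
noncomputable def wiener {n : ℕ} (G : SimpleGraph (Fin n)) : ℝ :=
  (∑ v : Fin n, transm G v) / 2

/-- The maximum transmission `Tr_max(G) = max_v Tr(v)`. -/
noncomputable def trMax {n : ℕ} (G : SimpleGraph (Fin n)) : ℝ :=
  ⨆ v : Fin n, transm G v

/-! ### Auxiliary lemmas -/

lemma DLS.eval_charpoly {n : ℕ} (M : Matrix (Fin n) (Fin n) ℝ) (r : ℝ) :
    M.charpoly.eval r = (Matrix.scalar (Fin n) r - M).det := by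
  rw [Matrix.charpoly, _root_.eval_det, Matrix.matPolyEquiv_charmatrix]
  simp

lemma DLS.sub_mulVec_scalar {n : ℕ} (M : Matrix (Fin n) (Fin n) ℝ) (r : ℝ) (v : Fin n → ℝ) :
    (Matrix.scalar (Fin n) r - M).mulVec v = r • v - M.mulVec v := by
  rw [Matrix.sub_mulVec]
  congr 1
  funext i
  simp [Matrix.mulVec_diagonal, Algebra.algebraMap_eq_smul_one]

/-- `r` is a root of the characteristic polynomial iff it has an eigenvector. -/
lemma DLS.root_iff_eigen {n : ℕ} (M : Matrix (Fin n) (Fin n) ℝ) (r : ℝ) :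
    M.charpoly.eval r = 0 ↔ ∃ v ≠ 0, M.mulVec v = r • v := by
  rw [DLS.eval_charpoly, ← Matrix.exists_mulVec_eq_zero_iff]
  constructor
  · rintro ⟨v, hv, h⟩
    exact ⟨v, hv, by rw [DLS.sub_mulVec_scalar] at h; linear_combination (norm := module) -h⟩
  · rintro ⟨v, hv, h⟩
    exact ⟨v, hv, by rw [DLS.sub_mulVec_scalar, h, sub_self]⟩

lemma DLS.distLap_isHermitian {n : ℕ} (G : SimpleGraph (Fin n)) : (distLap G).IsHermitian := by
  unfold Matrix.IsHermitian
  ext u v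
  by_cases h : u = v
  · subst h; simp [distLap, Matrix.conjTranspose_apply]
  · simp [distLap, Matrix.conjTranspose_apply, Matrix.diagonal_apply_ne _ h,
      Matrix.diagonal_apply_ne _ (Ne.symm h), SimpleGraph.dist_comm]

lemma DLS.qform {n : ℕ} (G : SimpleGraph (Fin n)) (x : Fin n → ℝ) :
    x ⬝ᵥ (distLap G).mulVec x
      = (∑ u : Fin n, ∑ w : Fin n, (G.dist u w : ℝ) * (x u - x w)^2) / 2 := by
  have hsym : ∀ u w : Fin n, (G.dist u w : ℝ) = (G.dist w u : ℝ) := by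
    intro u w; rw [SimpleGraph.dist_comm]
  have h1 : x ⬝ᵥ (distLap G).mulVec x
      = (∑ u : Fin n, ∑ w : Fin n, (G.dist u w : ℝ) * (x u)^2)
        - ∑ u : Fin n, ∑ w : Fin n, (G.dist u w : ℝ) * (x u * x w) := by
    rw [distLap, Matrix.sub_mulVec, dotProduct_sub]
    congr 1
    · simp only [dotProduct, Matrix.mulVec_diagonal, transm]
      congr 1; funext u
      rw [Finset.sum_mul, Finset.mul_sum]
      congr 1; funext w; ring
    · simp only [dotProduct, Matrix.mulVec, Matrix.of_apply]
      congr 1; funext u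
      rw [Finset.mul_sum]
      congr 1; funext w; ring
  have e2 : (∑ u : Fin n, ∑ w : Fin n, (G.dist u w : ℝ) * (x w)^2)
      = ∑ u : Fin n, ∑ w : Fin n, (G.dist u w : ℝ) * (x u)^2 := by
    rw [Finset.sum_comm]
    exact Finset.sum_congr rfl fun u _ => Finset.sum_congr rfl fun w _ => by rw [hsym]
  have e1 : (∑ u : Fin n, ∑ w : Fin n, (G.dist u w : ℝ) * (x u - x w)^2)
      = (∑ u : Fin n, ∑ w : Fin n, (G.dist u w : ℝ) * (x u)^2)
        - 2 * (∑ u : Fin n, ∑ w : Fin n, (G.dist u w : ℝ) * (x u * x w))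
        + ∑ u : Fin n, ∑ w : Fin n, (G.dist u w : ℝ) * (x w)^2 := by
    have step : ∀ u w : Fin n, (G.dist u w : ℝ) * (x u - x w)^2
        = (G.dist u w : ℝ) * (x u)^2 - 2 * ((G.dist u w : ℝ) * (x u * x w))
          + (G.dist u w : ℝ) * (x w)^2 := fun u w => by ring
    simp only [step, Finset.sum_add_distrib, Finset.sum_sub_distrib, ← Finset.mul_sum]
  rw [h1, e1, e2]
  ring

lemma DLS.qform_nonneg {n : ℕ} (G : SimpleGraph (Fin n)) (x : Fin n → ℝ) :
    0 ≤ x ⬝ᵥ (distLap G).mulVec x := by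
  rw [DLS.qform]
  apply div_nonneg _ (by norm_num)
  apply Finset.sum_nonneg; intro u _
  apply Finset.sum_nonneg; intro w _
  positivity

lemma DLS.rayleigh_le {n : ℕ} (M : Matrix (Fin n) (Fin n) ℝ) (hA : M.IsHermitian) (c : ℝ)
    (hc : ∀ i, hA.eigenvalues i ≤ c) (x : Fin n → ℝ) :
    x ⬝ᵥ M.mulVec x ≤ c * (x ⬝ᵥ x) := by
  set U : Matrix (Fin n) (Fin n) ℝ := (hA.eigenvectorUnitary : Matrix (Fin n) (Fin n) ℝ) with hU
  have hUmem : U ∈ Matrix.unitaryGroup (Fin n) ℝ := hA.eigenvectorUnitary.2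
  have hUU : U * star U = 1 := (Matrix.mem_unitaryGroup_iff).mp hUmem
  set y : Fin n → ℝ := (star U).mulVec x with hy
  have hDiag : M = U * Matrix.diagonal hA.eigenvalues * star U := by
    have h := hA.spectral_theorem
    rwa [RCLike.ofReal_real_eq_id, Function.id_comp] at h
  have hxy : U.mulVec y = x := by
    rw [hy, Matrix.mulVec_mulVec, hUU, Matrix.one_mulVec]
  have hstarT : star U = Uᵀ := by
    ext i j
    simp [Matrix.conjTranspose_apply, star_trivial]
  have key : x ⬝ᵥ M.mulVec x = ∑ i, hA.eigenvalues i * (y i)^2 := by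
    conv_lhs => rw [hDiag]
    rw [show (U * Matrix.diagonal hA.eigenvalues * star U).mulVec x
        = U.mulVec ((Matrix.diagonal hA.eigenvalues).mulVec y) by
      rw [hy, ← Matrix.mulVec_mulVec, ← Matrix.mulVec_mulVec]]
    rw [Matrix.dotProduct_mulVec, show x ᵥ* U = y by rw [hy, hstarT, Matrix.mulVec_transpose]]
    simp only [dotProduct, Matrix.mulVec_diagonal]
    exact Finset.sum_congr rfl fun i _ => by ring
  have hyy : y ⬝ᵥ y = x ⬝ᵥ x := by
    calc y ⬝ᵥ y = y ⬝ᵥ (star U).mulVec x := by rw [hy]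
    _ = (y ᵥ* star U) ⬝ᵥ x := by rw [Matrix.dotProduct_mulVec]
    _ = (U.mulVec y) ⬝ᵥ x := by
        congr 1
        rw [hstarT, Matrix.vecMul_transpose]
    _ = x ⬝ᵥ x := by rw [hxy]
  rw [key, ← hyy]
  calc ∑ i, hA.eigenvalues i * (y i)^2 ≤ ∑ i, c * (y i)^2 :=
        Finset.sum_le_sum fun i _ => mul_le_mul_of_nonneg_right (hc i) (sq_nonneg _)
  _ = c * (y ⬝ᵥ y) := by
      rw [dotProduct, Finset.mul_sum]
      exact Finset.sum_congr rfl fun i _ => by ring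

/-- Evaluation of the factored characteristic polynomial. -/
lemma DLS.eval_prod {n : ℕ} (μ : Fin n → ℝ) (r : ℝ) :
    (∏ i : Fin n, (X - C (μ i))).eval r = ∏ i : Fin n, (r - μ i) := by
  simp [Polynomial.eval_prod]

lemma DLS.sum_ite_point {n : ℕ} (v0 : Fin n) (a b : ℝ) :
    (∑ u : Fin n, (if u = v0 then a else b)) = a + ((n : ℝ) - 1) * b := by
  rw [← Finset.add_sum_erase _ _ (Finset.mem_univ v0), if_pos rfl]
  congr 1
  rw [Finset.sum_congr rfl (fun u hu => if_neg (Finset.ne_of_mem_erase hu)),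
    Finset.sum_const, Finset.card_erase_of_mem (Finset.mem_univ v0), Finset.card_univ,
    Fintype.card_fin, nsmul_eq_mul]
  have hn : 1 ≤ n := Nat.one_le_iff_ne_zero.mpr (by rintro rfl; exact absurd v0.2 (by simp))
  rw [Nat.cast_sub hn]
  simp

lemma DLS.trace_distLap {n : ℕ} (G : SimpleGraph (Fin n)) :
    (distLap G).trace = 2 * wiener G := by
  rw [wiener, Matrix.trace]
  rw [mul_div_cancel₀ _ (by norm_num : (2:ℝ) ≠ 0)]
  apply Finset.sum_congr rfl
  intro u _
  simp [Matrix.diag, distLap, SimpleGraph.dist_self]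

lemma DLS.sum_mu {n : ℕ} (hn : 3 ≤ n) (G : SimpleGraph (Fin n)) (μ : Fin n → ℝ)
    (hμ : IsDLSpec G μ) : ∑ i : Fin n, μ i = 2 * wiener G := by
  haveI : Nonempty (Fin n) := ⟨⟨0, Nat.lt_of_lt_of_le (by decide) hn⟩⟩
  have ht := Matrix.trace_eq_neg_charpoly_coeff (distLap G)
  rw [hμ] at ht
  have hcard : (Finset.univ : Finset (Fin n)).card = n := by simp
  have hc := Polynomial.prod_X_sub_C_coeff_card_pred (Finset.univ : Finset (Fin n)) μ
    (by rw [hcard]; omega)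
  rw [hcard] at hc
  rw [Fintype.card_fin, hc, neg_neg] at ht
  rw [← ht, DLS.trace_distLap]

lemma DLS.mu_eigen {n : ℕ} (G : SimpleGraph (Fin n)) (μ : Fin n → ℝ) (hμ : IsDLSpec G μ)
    (i : Fin n) : ∃ v ≠ 0, (distLap G).mulVec v = μ i • v := by
  rw [← DLS.root_iff_eigen, hμ, DLS.eval_prod]
  exact Finset.prod_eq_zero (Finset.mem_univ i) (by ring)

lemma DLS.eigen_mu {n : ℕ} (G : SimpleGraph (Fin n)) (μ : Fin n → ℝ) (hμ : IsDLSpec G μ)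
    (r : ℝ) (v : Fin n → ℝ) (hv : v ≠ 0) (h : (distLap G).mulVec v = r • v) :
    ∃ i : Fin n, μ i = r := by
  have : (distLap G).charpoly.eval r = 0 := (DLS.root_iff_eigen _ r).mpr ⟨v, hv, h⟩
  rw [hμ, DLS.eval_prod] at this
  obtain ⟨i, _, hi⟩ := Finset.prod_eq_zero_iff.mp this
  exact ⟨i, by linarith [sub_eq_zero.mp hi]⟩

lemma DLS.dotProduct_self_pos {n : ℕ} {v : Fin n → ℝ} (hv : v ≠ 0) : 0 < v ⬝ᵥ v := by
  rcases lt_or_eq_of_le (Finset.sum_nonneg fun i _ => mul_self_nonneg (v i) :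
    (0:ℝ) ≤ v ⬝ᵥ v) with h | h
  · exact h
  · exact absurd (dotProduct_self_eq_zero.mp h.symm) hv

lemma DLS.eigenvalue_nonneg {n : ℕ} (G : SimpleGraph (Fin n)) (μ : Fin n → ℝ)
    (hμ : IsDLSpec G μ) (i : Fin n) : 0 ≤ μ i := by
  obtain ⟨v, hv, h⟩ := DLS.mu_eigen G μ hμ i
  have h1 : v ⬝ᵥ (distLap G).mulVec v = μ i * (v ⬝ᵥ v) := by
    rw [h, dotProduct_smul, smul_eq_mul]
  have h2 := DLS.qform_nonneg G v
  nlinarith [DLS.dotProduct_self_pos hv]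

lemma DLS.transm_ge {n : ℕ} (G : SimpleGraph (Fin n)) (hG : G.Connected) (u : Fin n) :
    (n : ℝ) - 1 ≤ transm G u := by
  have key : ∀ w : Fin n, (if w = u then (0:ℝ) else 1) ≤ (G.dist u w : ℝ) := by
    intro w
    by_cases h : w = u
    · subst h; simp [SimpleGraph.dist_self]
    · rw [if_neg h]
      have := hG.pos_dist_of_ne (Ne.symm h)
      exact_mod_cast this
  calc (n : ℝ) - 1 = 0 + ((n:ℝ) - 1) * 1 := by ring
  _ = ∑ w : Fin n, (if w = u then (0:ℝ) else 1) := (DLS.sum_ite_point u 0 1).symm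
  _ ≤ transm G u := Finset.sum_le_sum fun w _ => key w

lemma DLS.dist_term_ge {n : ℕ} (G : SimpleGraph (Fin n)) (hG : G.Connected) (u w : Fin n) :
    (if w = u then (0:ℝ) else 1) ≤ (G.dist u w : ℝ) := by
  by_cases h : w = u
  · subst h; simp [SimpleGraph.dist_self]
  · rw [if_neg h]
    exact_mod_cast hG.pos_dist_of_ne (Ne.symm h)

lemma DLS.top_of_transm_le {n : ℕ} (G : SimpleGraph (Fin n)) (hG : G.Connected)
    (h : ∀ u : Fin n, transm G u ≤ (n : ℝ) - 1) : G = ⊤ := by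
  ext u w
  simp only [SimpleGraph.top_adj]
  constructor
  · exact fun hadj => hadj.ne
  · intro hne
    have hsum0 : ∑ w' : Fin n, ((G.dist u w' : ℝ) - (if w' = u then 0 else 1)) = 0 := by
      apply le_antisymm
      · rw [Finset.sum_sub_distrib, DLS.sum_ite_point u 0 1]
        have := h u
        rw [transm] at this
        linarith
      · exact Finset.sum_nonneg fun w' _ => by linarith [DLS.dist_term_ge G hG u w']
    have hterm := (Finset.sum_eq_zero_iff_of_nonneg
      (fun w' _ => by linarith [DLS.dist_term_ge G hG u w'])).mp hsum0 w (Finset.mem_univ w)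
    rw [if_neg (Ne.symm hne), sub_eq_zero] at hterm
    have : G.dist u w = 1 := by exact_mod_cast hterm
    exact SimpleGraph.dist_eq_one_iff_adj.mp this

lemma DLS.dist_top {n : ℕ} (u w : Fin n) :
    ((⊤ : SimpleGraph (Fin n)).dist u w : ℝ) = if w = u then 0 else 1 := by
  by_cases h : w = u
  · subst h; simp [SimpleGraph.dist_self]
  · rw [if_neg h]
    have : (⊤ : SimpleGraph (Fin n)).dist u w = 1 :=
      SimpleGraph.dist_eq_one_iff_adj.mpr (by simp [Ne.symm h])
    exact_mod_cast this

lemma DLS.transm_top {n : ℕ} (u : Fin n) :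
    transm (⊤ : SimpleGraph (Fin n)) u = (n : ℝ) - 1 := by
  rw [transm]
  simp only [DLS.dist_top]
  rw [DLS.sum_ite_point u 0 1]
  ring

lemma DLS.top_eigen {n : ℕ} (hn : 3 ≤ n) (r : ℝ) (v : Fin n → ℝ) (hv : v ≠ 0)
    (h : (distLap (⊤ : SimpleGraph (Fin n))).mulVec v = r • v) : r = 0 ∨ r = (n : ℝ) := by
  set S : ℝ := ∑ w : Fin n, v w with hS
  have heq : ∀ u : Fin n, (n : ℝ) * v u - S = r * v u := by
    intro u
    have hu := congrFun h u
    have hlhs : (distLap (⊤ : SimpleGraph (Fin n))).mulVec v u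
        = transm ⊤ u * v u - (S - v u) := by
      rw [Matrix.mulVec, dotProduct]
      have : ∀ w : Fin n, distLap (⊤ : SimpleGraph (Fin n)) u w * v w
          = (if w = u then transm ⊤ u * v u else 0) - (v w - if w = u then v w else 0) := by
        intro w
        by_cases hw : w = u
        · subst hw; simp [distLap, SimpleGraph.dist_self]
        · simp [distLap, Matrix.diagonal_apply_ne' _ hw, DLS.dist_top, if_neg hw]
      rw [Finset.sum_congr rfl fun w _ => this w, Finset.sum_sub_distrib,
        Finset.sum_sub_distrib, Finset.sum_ite_eq' Finset.univ u, Finset.sum_ite_eq'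
        Finset.univ u]
      simp [hS]
    rw [hlhs, DLS.transm_top] at hu
    simp only [Pi.smul_apply, smul_eq_mul] at hu
    linarith
  by_cases hr : r = (n : ℝ)
  · right; exact hr
  left
  have hne : (n : ℝ) - r ≠ 0 := sub_ne_zero.mpr fun hh => hr hh.symm
  have hvc : ∀ u : Fin n, v u = S / ((n : ℝ) - r) := by
    intro u
    have := heq u
    field_simp
    linarith
  have hSn : S = (n : ℝ) * (S / ((n : ℝ) - r)) := by
    conv_lhs => rw [hS, Finset.sum_congr rfl fun u _ => hvc u]
    rw [Finset.sum_const, Finset.card_univ, Fintype.card_fin, nsmul_eq_mul]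
  have hS0 : S ≠ 0 := by
    intro h0
    apply hv
    funext u
    rw [hvc u, h0, zero_div]
    rfl
  have : S * ((n:ℝ) - r) = (n:ℝ) * S := by
    field_simp at hSn
    rw [hSn]; ring
  have : S * r = 0 := by ring_nf; ring_nf at this; linarith
  rcases mul_eq_zero.mp this with h' | h'
  · exact absurd h' hS0
  · exact h'

lemma DLS.rayleigh_apply {n : ℕ} (hn : 3 ≤ n) (G : SimpleGraph (Fin n)) (μ : Fin n → ℝ)
    (hμ : IsDLSpec G μ) (hmono : Antitone μ) (v0 : Fin n) :
    (n:ℝ)^2 * transm G v0 ≤ μ ⟨0, Nat.lt_of_lt_of_le (by decide) hn⟩ * ((n:ℝ)^2 - (n:ℝ)) := by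
  set hA := DLS.distLap_isHermitian G with hAdef
  have hc : ∀ j, hA.eigenvalues j ≤ μ ⟨0, Nat.lt_of_lt_of_le (by decide) hn⟩ := by
    intro j
    have hev := hA.mulVec_eigenvectorBasis j
    have hnz : (⇑(hA.eigenvectorBasis j) : Fin n → ℝ) ≠ 0 := by
      intro h0
      apply hA.eigenvectorBasis.orthonormal.ne_zero j
      ext k; exact congrFun h0 k
    obtain ⟨k, hk⟩ := DLS.eigen_mu G μ hμ _ _ hnz hev
    rw [← hk]
    exact hmono (by simp [Fin.le_def])
  set x : Fin n → ℝ := fun u => if u = v0 then (n:ℝ) - 1 else -1 with hx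
  have hray := DLS.rayleigh_le _ hA _ hc x
  have hxx : x ⬝ᵥ x = (n:ℝ)^2 - n := by
    rw [dotProduct]
    have : ∀ u : Fin n, x u * x u = if u = v0 then ((n:ℝ)-1)^2 else 1 := by
      intro u
      by_cases hu : u = v0 <;> simp [hx, hu] <;> ring
    rw [Finset.sum_congr rfl fun u _ => this u, DLS.sum_ite_point]
    ring
  have hq : x ⬝ᵥ (distLap G).mulVec x = (n:ℝ)^2 * transm G v0 := by
    rw [DLS.qform]
    have step : ∀ u w : Fin n, (G.dist u w : ℝ) * (x u - x w)^2
        = (n:ℝ)^2 * ((if u = v0 then (G.dist u w : ℝ) else 0)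
            + (if w = v0 then (G.dist u w : ℝ) else 0)) := by
      intro u w
      by_cases hu : u = v0 <;> by_cases hw : w = v0
      · subst hu; subst hw; simp [SimpleGraph.dist_self]
      · subst hu; simp [hx, hw]; ring
      · subst hw; simp [hx, hu]; ring
      · simp [hx, hu, hw]
    rw [Finset.sum_congr rfl fun u _ => Finset.sum_congr rfl fun w _ => step u w]
    have hA1 : ∑ u : Fin n, ∑ w : Fin n, (if u = v0 then (G.dist u w : ℝ) else 0)
        = transm G v0 := by
      have : ∀ u : Fin n, (∑ w : Fin n, (if u = v0 then (G.dist u w : ℝ) else 0))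
          = if u = v0 then transm G u else 0 := by
        intro u; split <;> simp [transm]
      rw [Finset.sum_congr rfl fun u _ => this u, Finset.sum_ite_eq' Finset.univ v0]
      simp
    have hA2 : ∑ u : Fin n, ∑ w : Fin n, (if w = v0 then (G.dist u w : ℝ) else 0)
        = transm G v0 := by
      have : ∀ u : Fin n, (∑ w : Fin n, (if w = v0 then (G.dist u w : ℝ) else 0))
          = (G.dist v0 u : ℝ) := by
        intro u
        rw [Finset.sum_ite_eq' Finset.univ v0]
        simp [SimpleGraph.dist_comm]
      rw [Finset.sum_congr rfl fun u _ => this u]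
      rfl
    simp only [← Finset.mul_sum, Finset.sum_add_distrib]
    rw [hA1, hA2]
    ring
  rw [hq, hxx] at hray
  exact hray

theorem dls_lower_wiener_trMax (n : ℕ) (hn : 3 ≤ n) (G : SimpleGraph (Fin n))
    (hG : G.Connected) (μ : Fin n → ℝ) (hμ : IsDLSpec G μ) (hmono : Antitone μ) :
    (((n : ℝ) - 1) * (trMax G + 1) - 2 * wiener G) / ((n : ℝ) - 2)
      ≤ μ ⟨0, by omega⟩ - μ ⟨n - 2, by omega⟩ ∧
    (μ ⟨0, by omega⟩ - μ ⟨n - 2, by omega⟩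
        = (((n : ℝ) - 1) * (trMax G + 1) - 2 * wiener G) / ((n : ℝ) - 2) ↔ G = ⊤) := by
  haveI : Nonempty (Fin n) := ⟨⟨0, by omega⟩⟩
  set i0 : Fin n := ⟨0, by omega⟩ with hi0
  set i1 : Fin n := ⟨n - 2, by omega⟩ with hi1
  set i2 : Fin n := ⟨n - 1, by omega⟩ with hi2
  have hn3 : (3:ℝ) ≤ (n:ℝ) := by exact_mod_cast hn
  obtain ⟨v0, hv0⟩ := Finite.exists_max (transm G)
  have hTmax : trMax G = transm G v0 := le_antisymm (ciSup_le hv0)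
    (le_ciSup (Set.Finite.bddAbove (Set.finite_range (transm G))) v0)
  have hT1 : ∀ u, transm G u ≤ trMax G := fun u => hTmax ▸ hv0 u
  have hTn : (n:ℝ) - 1 ≤ trMax G := le_trans (DLS.transm_ge G hG v0) hTmax.ge
  have hsum := DLS.sum_mu hn G μ hμ
  have h0le : (0:ℝ) ≤ μ i2 := DLS.eigenvalue_nonneg G μ hμ i2
  have hne02 : i0 ≠ i2 := by simp only [hi0, hi2, ne_eq, Fin.mk.injEq]; omega
  have hmem2 : i2 ∈ Finset.univ.erase i0 :=
    Finset.mem_erase.mpr ⟨Ne.symm hne02, Finset.mem_univ i2⟩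
  have hdecomp : ∑ i : Fin n, μ i
      = μ i0 + (μ i2 + ∑ i ∈ (Finset.univ.erase i0).erase i2, μ i) := by
    rw [← Finset.add_sum_erase _ _ (Finset.mem_univ i0)]
    congr 1
    rw [← Finset.add_sum_erase _ _ hmem2]
  have hcard : ((Finset.univ.erase i0).erase i2).card = n - 2 := by
    rw [Finset.card_erase_of_mem hmem2,
      Finset.card_erase_of_mem (Finset.mem_univ i0), Finset.card_univ, Fintype.card_fin]
    omega
  have hmid : ∀ i ∈ (Finset.univ.erase i0).erase i2, μ i1 ≤ μ i := by
    intro i hi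
    apply hmono
    have h2 : i ≠ i2 := (Finset.mem_erase.mp hi).1
    have hvne : i.val ≠ n - 1 := fun hh => h2 (Fin.ext (by rw [hh, hi2]))
    have := i.2
    rw [Fin.le_def, hi1]
    simp only
    omega
  have hmidsum : ((n:ℝ) - 2) * μ i1 ≤ ∑ i ∈ (Finset.univ.erase i0).erase i2, μ i := by
    calc ((n:ℝ)-2) * μ i1 = (((n-2 : ℕ)) : ℝ) * μ i1 := by
          rw [Nat.cast_sub (by omega)]; norm_num
    _ = ∑ _i ∈ (Finset.univ.erase i0).erase i2, μ i1 := by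
          rw [Finset.sum_const, hcard, nsmul_eq_mul]
    _ ≤ _ := Finset.sum_le_sum hmid
  have hkey : μ i0 + ((n:ℝ)-2) * μ i1 ≤ 2 * wiener G := by
    rw [← hsum, hdecomp]; linarith
  have hrayA := DLS.rayleigh_apply hn G μ hμ hmono v0
  rw [← hTmax] at hrayA
  have hA0 : (n:ℝ) * trMax G ≤ μ i0 * ((n:ℝ)-1) := by
    have h' : (n:ℝ) * ((n:ℝ) * trMax G) ≤ (n:ℝ) * (μ i0 * ((n:ℝ)-1)) := by
      ring_nf; ring_nf at hrayA; linarith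
    exact le_of_mul_le_mul_left h' (by linarith)
  have ha : trMax G + 1 ≤ μ i0 := by
    have h'' : (trMax G + 1) * ((n:ℝ)-1) ≤ μ i0 * ((n:ℝ)-1) := by nlinarith [hA0, hTn]
    exact le_of_mul_le_mul_right h'' (by linarith)
  have hineq : (((n:ℝ)-1)*(trMax G + 1) - 2*wiener G)/((n:ℝ)-2) ≤ μ i0 - μ i1 := by
    rw [div_le_iff₀ (by linarith : (0:ℝ) < (n:ℝ)-2)]
    nlinarith [hkey, mul_nonneg (sub_nonneg.mpr ha) (show (0:ℝ) ≤ (n:ℝ)-1 by linarith)]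
  refine ⟨hineq, ?_, ?_⟩
  · intro heq
    have hup : ((n:ℝ)-1)*μ i0 - 2*wiener G ≤ (μ i0 - μ i1)*((n:ℝ)-2) := by nlinarith [hkey]
    have heq' : (μ i0 - μ i1) * ((n:ℝ)-2) = ((n:ℝ)-1)*(trMax G+1) - 2*wiener G := by
      rw [heq]
      exact div_mul_cancel₀ _ (by linarith : ((n:ℝ)-2) ≠ 0)
    have hμ0le : μ i0 ≤ trMax G + 1 := by
      have : ((n:ℝ)-1)*μ i0 ≤ ((n:ℝ)-1)*(trMax G+1) := by linarith [hup, heq'.le]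
      nlinarith [this]
    have hTle : trMax G ≤ (n:ℝ)-1 := by
      nlinarith [hA0, mul_le_mul_of_nonneg_right hμ0le (show (0:ℝ) ≤ (n:ℝ)-1 by linarith)]
    exact DLS.top_of_transm_le G hG fun u => le_trans (hT1 u) hTle
  · intro htop
    subst htop
    have htr : trMax (⊤ : SimpleGraph (Fin n)) = (n:ℝ)-1 := by
      rw [trMax]
      simp only [DLS.transm_top]
      exact ciSup_const
    have hw : 2 * wiener (⊤ : SimpleGraph (Fin n)) = (n:ℝ) * ((n:ℝ)-1) := by
      rw [wiener, Finset.sum_congr rfl fun v _ => DLS.transm_top v, Finset.sum_const,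
        Finset.card_univ, Fintype.card_fin, nsmul_eq_mul]
      ring
    have hall : ∀ i : Fin n, μ i = 0 ∨ μ i = n := fun i => by
      obtain ⟨v, hv, hev⟩ := DLS.mu_eigen _ μ hμ i
      exact DLS.top_eigen hn _ v hv hev
    rw [hw] at hsum
    have hμ1 : μ i1 = n := by
      rcases hall i1 with h1 | h1
      · exfalso
        have hμ2 : μ i2 = 0 := by
          rcases hall i2 with h2 | h2
          · exact h2
          · exfalso
            have hle := hmono (show i1 ≤ i2 by rw [hi1, hi2, Fin.mk_le_mk]; omega)
            rw [h1, h2] at hle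
            linarith
        have hne12 : i1 ≠ i2 := by simp only [hi1, hi2, ne_eq, Fin.mk.injEq]; omega
        have hmem2' : i2 ∈ Finset.univ.erase i1 :=
          Finset.mem_erase.mpr ⟨Ne.symm hne12, Finset.mem_univ i2⟩
        have hdec2 : ∑ i : Fin n, μ i
            = μ i1 + (μ i2 + ∑ i ∈ (Finset.univ.erase i1).erase i2, μ i) := by
          rw [← Finset.add_sum_erase _ _ (Finset.mem_univ i1)]
          congr 1
          rw [← Finset.add_sum_erase _ _ hmem2']
        have hcard2 : ((Finset.univ.erase i1).erase i2).card = n - 2 := by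
          rw [Finset.card_erase_of_mem hmem2',
            Finset.card_erase_of_mem (Finset.mem_univ i1), Finset.card_univ, Fintype.card_fin]
          omega
        have hbound : ∑ i ∈ (Finset.univ.erase i1).erase i2, μ i ≤ ((n:ℝ)-2) * n := by
          calc ∑ i ∈ (Finset.univ.erase i1).erase i2, μ i
              ≤ ∑ _i ∈ (Finset.univ.erase i1).erase i2, (n:ℝ) :=
                Finset.sum_le_sum fun i _ => by rcases hall i with h | h <;> rw [h] <;> linarith
          _ = ((n:ℝ)-2) * n := by
              rw [Finset.sum_const, hcard2, nsmul_eq_mul, Nat.cast_sub (by omega)]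
              norm_num
        rw [hdec2, h1, hμ2] at hsum
        nlinarith [hsum, hbound]
      · exact h1
    have hμ0 : μ i0 = n := by
      rcases hall i0 with h0' | h0'
      · exfalso
        have hle := hmono (show i0 ≤ i1 by rw [hi0, hi1, Fin.mk_le_mk]; omega)
        rw [h0', hμ1] at hle
        linarith
      · exact h0'
    have hnum : ((n:ℝ)-1)*(((n:ℝ)-1)+1) - (n:ℝ)*((n:ℝ)-1) = 0 := by ring
    rw [hμ0, hμ1, htr, hw, sub_self, hnum, zero_div]
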